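/- For an ordered Π-net, every S-semi-flow v (i.e., v·W = 0) is a unique rational linear combination of the vectors v_i = ∑_{p ∈ P_i} B(p), i = 1, …, n; that is, {v_1, …, v_n} is a basis of the left kernel of the incidence matrix W. -/
import Mathlib


open Finset

/-- A transition `t` is enabled at marking `m`. -/
def enabledAt {P T : Type*} (Wm : P → T → ℕ) (m : P → ℕ) (t : T) : Prop :=
  ∀ p, Wm p t ≤ m p

/-- Firing transition `t` at marking `m`. -/
def fireAt {P T : Type*} (Wm Wp : P → T → ℕ) (m : P → ℕ) (t : T) : P → ℕ :=
  fun p => m p - Wm p t + Wp p t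

/-- One step of the reachability graph. -/
def step {P T : Type*} (Wm Wp : P → T → ℕ) (m m' : P → ℕ) : Prop :=
  ∃ t, enabledAt Wm m t ∧ m' = fireAt Wm Wp m t

/-- Reachability relation. -/
def reach {P T : Type*} (Wm Wp : P → T → ℕ) : (P → ℕ) → (P → ℕ) → Prop :=
  Relation.ReflTransGen (step Wm Wp)

/-- Input bag of a transition. -/
def preBag {P T : Type*} (Wm : P → T → ℕ) (t : T) : P → ℕ := fun p => Wm p t

/-- Output bag of a transition. -/
def postBag {P T : Type*} (Wp : P → T → ℕ) (t : T) : P → ℕ := fun p => Wp p t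

/-- The finite set of complexes of the net. -/
def complexes {P T : Type*} [Fintype P] [Fintype T] [DecidableEq P]
    (Wm Wp : P → T → ℕ) : Finset (P → ℕ) :=
  (Finset.univ.image (preBag Wm)) ∪ (Finset.univ.image (postBag Wp))

/-- `c` is a complex of the net. -/
def isComplex {P T : Type*} (Wm Wp : P → T → ℕ) (c : P → ℕ) : Prop :=
  (∃ t, c = preBag Wm t) ∨ (∃ t, c = postBag Wp t)

/-- Arc of the reaction graph. -/
def rarc {P T : Type*} (Wm Wp : P → T → ℕ) (c c' : P → ℕ) : Prop :=
  ∃ t, c = preBag Wm t ∧ c' = postBag Wp t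

/-- Weak reversibility: every connected component of the reaction graph is
strongly connected. -/
def weaklyReversible {P T : Type*} (Wm Wp : P → T → ℕ) : Prop :=
  ∀ c c', isComplex Wm Wp c → isComplex Wm Wp c' →
    Relation.ReflTransGen (fun a b => rarc Wm Wp a b ∨ rarc Wm Wp b a) c c' →
    Relation.ReflTransGen (rarc Wm Wp) c c'

/-- An `n`-level ordered Π-net.  Levels are indexed by `Fin n`, index `i`
standing for level `i+1` of the informal definition.  Every level is a
strongly connected state machine through which the transitions of that level
route exactly one token; transitions of level `i+1` may in addition consume
and produce tokens of level `i`; every level (except the lowest) is connected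
to the one below it; two transitions of a level sharing their input (resp.
output) place at that level have equal input (resp. output) bags; and the net
is weakly reversible. -/
structure OrderedPiNet (n : ℕ) (P T : Type*) [Fintype P] [Fintype T]
    [DecidableEq P] [DecidableEq T] where
  Wm : P → T → ℕ
  Wp : P → T → ℕ
  lvlP : P → Fin n
  lvlT : T → Fin n
  lvl_surj : Function.Surjective lvlP
  inPlace : T → P
  outPlace : T → P
  inPlace_lvl : ∀ t, lvlP (inPlace t) = lvlT t
  outPlace_lvl : ∀ t, lvlP (outPlace t) = lvlT t
  Wm_in : ∀ t, Wm (inPlace t) t = 1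
  Wp_out : ∀ t, Wp (outPlace t) t = 1
  Wm_own : ∀ t p, lvlP p = lvlT t → p ≠ inPlace t → Wm p t = 0
  Wp_own : ∀ t p, lvlP p = lvlT t → p ≠ outPlace t → Wp p t = 0
  Wm_below : ∀ t p, Wm p t ≠ 0 → lvlP p = lvlT t ∨ (lvlP p : ℕ) + 1 = (lvlT t : ℕ)
  Wp_below : ∀ t p, Wp p t ≠ 0 → lvlP p = lvlT t ∨ (lvlP p : ℕ) + 1 = (lvlT t : ℕ)
  connected_below : ∀ i : Fin n, (i : ℕ) ≠ 0 →
    ∃ t p, lvlT t = i ∧ (lvlP p : ℕ) + 1 = (i : ℕ) ∧ Wm p t ≠ 0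
  sameIn : ∀ t t', inPlace t = inPlace t' → ∀ p, Wm p t = Wm p t'
  sameOut : ∀ t t', outPlace t = outPlace t' → ∀ p, Wp p t = Wp p t'
  strong : ∀ p q, lvlP p = lvlP q →
    Relation.ReflTransGen (fun a b => ∃ t, inPlace t = a ∧ outPlace t = b) p q
  wr : weaklyReversible Wm Wp

namespace OrderedPiNet

variable {n : ℕ} {P T : Type*} [Fintype P] [Fintype T] [DecidableEq P] [DecidableEq T]

/-- The potential `pot(p, q)`: the number of tokens `t•(q)` put in `q` by a
common input transition `t` of `p` and `q`, when `q` is one level below `p`,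
and `0` otherwise. -/
noncomputable def pot (N : OrderedPiNet n P T) (p q : P) : ℕ :=
  if h : ((N.lvlP q : ℕ) + 1 = (N.lvlP p : ℕ)) ∧ ∃ t, N.outPlace t = p ∧ N.Wp q t ≠ 0
  then N.Wp q h.2.choose else 0

/-- The potential of a place: `pot(p) = ∑_{q} pot(p, q)`. -/
noncomputable def potT (N : OrderedPiNet n P T) (p : P) : ℕ := ∑ q, N.pot p q

/-- The marking witness transform `m ↦ m̃`:
`m̃(p) = m(p) − ∑_{r one level above p} m̃(r) · pot(r, p)`. -/
noncomputable def mw (N : OrderedPiNet n P T) (m : P → ℤ) (p : P) : ℤ :=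
  m p - ∑ r : P, (if h : (N.lvlP p : ℕ) + 1 = (N.lvlP r : ℕ)
    then N.mw m r * (N.pot r p : ℤ) else 0)
termination_by n - (N.lvlP p : ℕ)
decreasing_by
  have h1 : (N.lvlP r : ℕ) < n := (N.lvlP r).isLt
  omega

/-- The row `v_i` of S-invariants applied to a vector: `v_i · x = ∑_{p ∈ P_i} x̃(p)`. -/
noncomputable def vRow (N : OrderedPiNet n P T) (i : Fin n) (x : P → ℤ) : ℤ :=
  ∑ p ∈ Finset.univ.filter (fun p => N.lvlP p = i), N.mw x p

/-- Number of tokens of `m` in `P_i`. -/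
def lvlCount (N : OrderedPiNet n P T) (i : Fin n) (m : P → ℕ) : ℕ :=
  ∑ p ∈ Finset.univ.filter (fun p => N.lvlP p = i), m p

/-- Number of tokens of `m` in `P_{i−1}` (the level just below `i`). -/
def belowCount (N : OrderedPiNet n P T) (i : Fin n) (m : P → ℕ) : ℕ :=
  ∑ p ∈ Finset.univ.filter (fun p => (N.lvlP p : ℕ) + 1 = (i : ℕ)), m p

/-- The level-`i` minimal marked potential `φ_i(m)`. -/
noncomputable def phi (N : OrderedPiNet n P T) (i : Fin n) (m : P → ℕ) : ℕ :=
  if N.lvlCount i m = 0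
  then (Finset.univ.filter (fun p => N.lvlP p = i)).sup N.potT
  else sInf (N.potT '' {p | N.lvlP p = i ∧ m p ≠ 0})

/-- The Π³ condition: every interface place has maximal potential on its level. -/
def isPi3 (N : OrderedPiNet n P T) : Prop :=
  ∀ p t, (N.lvlP p : ℕ) + 1 = (N.lvlT t : ℕ) → N.Wp p t ≠ 0 →
    ∀ q, N.lvlP q = N.lvlP p → N.potT q ≤ N.potT p

/-- One step using only transitions of level index at most `i`. -/
def stepUpTo (N : OrderedPiNet n P T) (i : Fin n) (m m' : P → ℕ) : Prop :=
  ∃ t, N.lvlT t ≤ i ∧ enabledAt N.Wm m t ∧ m' = fireAt N.Wm N.Wp m t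

/-- Reachability using only transitions of level index at most `i` (the set `R_i`). -/
def reachUpTo (N : OrderedPiNet n P T) (i : Fin n) : (P → ℕ) → (P → ℕ) → Prop :=
  Relation.ReflTransGen (N.stepUpTo i)

/-- `i`-liveness. -/
def iLive (N : OrderedPiNet n P T) (i : Fin n) (m : P → ℕ) : Prop :=
  ∀ t, N.lvlT t ≤ i → ∃ m', N.reachUpTo i m m' ∧ enabledAt N.Wm m' t

/-- The `i`-condition: `m(P_i) > 0` and `m(P_{j−1}) ≥ φ_j(m)` for all levels
`j` with `2 ≤ j ≤ i` (in 1-based numbering). -/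
def iCond (N : OrderedPiNet n P T) (i : Fin n) (m : P → ℕ) : Prop :=
  N.lvlCount i m ≠ 0 ∧
  ∀ j : Fin n, 1 ≤ (j : ℕ) → j ≤ i → N.phi j m ≤ N.belowCount j m

end OrderedPiNet

/-- The vector `v_i = ∑_{p ∈ P_i} B(p)`, as a rational row vector. -/
noncomputable def vBasis {n : ℕ} {P T : Type*} [Fintype P] [Fintype T]
    [DecidableEq P] [DecidableEq T] (N : OrderedPiNet n P T) (i : Fin n) (q : P) : ℚ :=
  ((∑ p ∈ Finset.univ.filter (fun p => N.lvlP p = i),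
      N.mw (fun r => if r = q then 1 else 0) p : ℤ) : ℚ)

namespace OrderedPiNet
variable {n : ℕ} {P T : Type*} [Fintype P] [Fintype T] [DecidableEq P] [DecidableEq T]

lemma mw_def (N : OrderedPiNet n P T) (m : P → ℤ) (p : P) :
    N.mw m p = m p - ∑ r : P, (if (N.lvlP p : ℕ) + 1 = (N.lvlP r : ℕ)
      then N.mw m r * (N.pot r p : ℤ) else 0) := by
  rw [OrderedPiNet.mw]
  simp only [dite_eq_ite]

lemma pot_out (N : OrderedPiNet n P T) (t : T) (p : P)
    (h : (N.lvlP p : ℕ) + 1 = (N.lvlT t : ℕ)) :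
    N.pot (N.outPlace t) p = N.Wp p t := by
  unfold pot
  split_ifs with h'
  · exact N.sameOut _ t h'.2.choose_spec.1 p
  · by_cases hz : N.Wp p t = 0
    · exact hz.symm
    · exact absurd ⟨by rw [N.outPlace_lvl]; exact h, t, rfl, hz⟩ h'

lemma top_eq (N : OrderedPiNet n P T) (t s : T)
    (h : ∀ p, N.Wm p t = N.Wp p s) : N.inPlace t = N.outPlace s := by
  by_contra hne
  have h1 : N.Wp (N.inPlace t) s ≠ 0 := by rw [← h]; simp [N.Wm_in]
  have h2 : N.Wm (N.outPlace s) t ≠ 0 := by rw [h]; simp [N.Wp_out]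
  have hA : (N.lvlP (N.inPlace t) : ℕ) + 1 = (N.lvlT s : ℕ) := by
    rcases N.Wp_below s (N.inPlace t) h1 with h' | h'
    · exact absurd (N.Wp_own s (N.inPlace t) h' hne) h1
    · exact h'
  have hB : (N.lvlP (N.outPlace s) : ℕ) + 1 = (N.lvlT t : ℕ) := by
    rcases N.Wm_below t (N.outPlace s) h2 with h' | h'
    · exact absurd (N.Wm_own t (N.outPlace s) h' (Ne.symm hne)) h2
    · exact h'
  rw [N.inPlace_lvl] at hA
  rw [N.outPlace_lvl] at hB
  omega

lemma exists_mirror (N : OrderedPiNet n P T) (t : T) :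
    ∃ s, N.outPlace s = N.inPlace t ∧ ∀ p, N.Wp p s = N.Wm p t := by
  have hpath : Relation.ReflTransGen (rarc N.Wm N.Wp) (postBag N.Wp t) (preBag N.Wm t) := by
    apply N.wr
    · exact Or.inr ⟨t, rfl⟩
    · exact Or.inl ⟨t, rfl⟩
    · exact Relation.ReflTransGen.single (Or.inr ⟨t, rfl, rfl⟩)
  have hex : ∃ s, postBag N.Wp s = preBag N.Wm t := by
    rcases hpath.cases_tail with heq | ⟨b, _, hb⟩
    · exact ⟨t, heq.symm⟩
    · rcases hb with ⟨s, _, hpost⟩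
      exact ⟨s, hpost.symm⟩
  rcases hex with ⟨s, hs⟩
  have hfun : ∀ p, N.Wm p t = N.Wp p s := fun p => (congrFun hs p).symm
  exact ⟨s, (N.top_eq t s hfun).symm, fun p => (hfun p).symm⟩

lemma pot_in (N : OrderedPiNet n P T) (t : T) (p : P)
    (h : (N.lvlP p : ℕ) + 1 = (N.lvlT t : ℕ)) :
    N.pot (N.inPlace t) p = N.Wm p t := by
  obtain ⟨s, hs, hws⟩ := N.exists_mirror t
  unfold pot
  split_ifs with h'
  · rw [N.sameOut _ s (h'.2.choose_spec.1.trans hs.symm) p, hws]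
  · by_cases hz : N.Wm p t = 0
    · exact hz.symm
    · exact absurd ⟨by rw [N.inPlace_lvl]; exact h, s, hs, by rw [hws]; exact hz⟩ h'

lemma mw_delta (N : OrderedPiNet n P T) (t : T) (p : P) :
    N.mw (fun q => (N.Wp q t : ℤ) - (N.Wm q t : ℤ)) p
      = (if p = N.outPlace t then 1 else 0) - (if p = N.inPlace t then 1 else 0) := by
  set Δ : P → ℤ := fun q => (N.Wp q t : ℤ) - (N.Wm q t : ℤ) with hΔ
  suffices H : ∀ k, ∀ p : P, n - (N.lvlP p : ℕ) ≤ k → N.mw Δ p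
      = (if p = N.outPlace t then 1 else 0) - (if p = N.inPlace t then 1 else 0) from
    H n p (by omega)
  intro k
  induction k with
  | zero => exact fun p hp => absurd hp (by have := (N.lvlP p).isLt; omega)
  | succ k IH =>
    intro p hp
    rw [N.mw_def]
    have hrec : ∀ r : P, (N.lvlP p : ℕ) + 1 = (N.lvlP r : ℕ) → N.mw Δ r
        = (if r = N.outPlace t then 1 else 0) - (if r = N.inPlace t then 1 else 0) := by
      intro r hr
      exact IH r (by have := (N.lvlP r).isLt; omega)
    have hout : N.lvlP (N.outPlace t) = N.lvlT t := N.outPlace_lvl t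
    have hin : N.lvlP (N.inPlace t) = N.lvlT t := N.inPlace_lvl t
    by_cases h1 : N.lvlP p = N.lvlT t
    · -- own level
      have hz : ∀ r : P, (if (N.lvlP p : ℕ) + 1 = (N.lvlP r : ℕ)
          then N.mw Δ r * (N.pot r p : ℤ) else 0) = 0 := by
        intro r
        split_ifs with hr
        · rw [hrec r hr]
          have h1' : r ≠ N.outPlace t := by
            rintro rfl; rw [hout] at hr; rw [h1] at hr; omega
          have h2' : r ≠ N.inPlace t := by
            rintro rfl; rw [hin] at hr; rw [h1] at hr; omega
          simp [h1', h2']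
        · rfl
      rw [Finset.sum_congr rfl fun r _ => hz r, Finset.sum_const_zero, sub_zero, hΔ]
      have hWp : N.Wp p t = if p = N.outPlace t then 1 else 0 := by
        split_ifs with h'
        · subst h'; exact N.Wp_out t
        · exact N.Wp_own t p h1 h'
      have hWm : N.Wm p t = if p = N.inPlace t then 1 else 0 := by
        split_ifs with h'
        · subst h'; exact N.Wm_in t
        · exact N.Wm_own t p h1 h'
      simp only [hWp, hWm]
      split_ifs <;> norm_num
    · by_cases h2 : (N.lvlP p : ℕ) + 1 = (N.lvlT t : ℕ)
      · -- one level below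
        have hterm : ∀ r : P, (if (N.lvlP p : ℕ) + 1 = (N.lvlP r : ℕ)
            then N.mw Δ r * (N.pot r p : ℤ) else 0)
            = (if r = N.outPlace t then (N.pot r p : ℤ) else 0)
              - (if r = N.inPlace t then (N.pot r p : ℤ) else 0) := by
          intro r
          by_cases hr : (N.lvlP p : ℕ) + 1 = (N.lvlP r : ℕ)
          · rw [if_pos hr, hrec r hr]
            have e1 : (if r = N.outPlace t then (N.pot r p : ℤ) else 0)
                = (if r = N.outPlace t then (1 : ℤ) else 0) * (N.pot r p : ℤ) := by
              split_ifs <;> ring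
            have e2 : (if r = N.inPlace t then (N.pot r p : ℤ) else 0)
                = (if r = N.inPlace t then (1 : ℤ) else 0) * (N.pot r p : ℤ) := by
              split_ifs <;> ring
            rw [e1, e2]; ring
          · rw [if_neg hr]
            have h1' : r ≠ N.outPlace t := by rintro rfl; exact hr (by rw [hout]; exact h2)
            have h2' : r ≠ N.inPlace t := by rintro rfl; exact hr (by rw [hin]; exact h2)
            simp [h1', h2']
        rw [Finset.sum_congr rfl fun r _ => hterm r, Finset.sum_sub_distrib,
          Finset.sum_ite_eq' Finset.univ (N.outPlace t) (fun r => (N.pot r p : ℤ)),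
          Finset.sum_ite_eq' Finset.univ (N.inPlace t) (fun r => (N.pot r p : ℤ))]
        simp only [Finset.mem_univ, if_true]
        rw [N.pot_out t p h2, N.pot_in t p h2, hΔ]
        have hpo : p ≠ N.outPlace t := by rintro rfl; rw [hout] at h2; omega
        have hpi : p ≠ N.inPlace t := by rintro rfl; rw [hin] at h2; omega
        simp [hpo, hpi]
      · -- unrelated level
        have hWp : N.Wp p t = 0 := by
          by_contra hz
          rcases N.Wp_below t p hz with h' | h'
          · exact h1 h'
          · exact h2 h'
        have hWm : N.Wm p t = 0 := by
          by_contra hz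
          rcases N.Wm_below t p hz with h' | h'
          · exact h1 h'
          · exact h2 h'
        have hz : ∀ r : P, (if (N.lvlP p : ℕ) + 1 = (N.lvlP r : ℕ)
            then N.mw Δ r * (N.pot r p : ℤ) else 0) = 0 := by
          intro r
          split_ifs with hr
          · rw [hrec r hr]
            have h1' : r ≠ N.outPlace t := by rintro rfl; rw [hout] at hr; omega
            have h2' : r ≠ N.inPlace t := by rintro rfl; rw [hin] at hr; omega
            simp [h1', h2']
          · rfl
        rw [Finset.sum_congr rfl fun r _ => hz r, Finset.sum_const_zero, sub_zero, hΔ]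
        have hpo : p ≠ N.outPlace t := by rintro rfl; exact h1 hout
        have hpi : p ≠ N.inPlace t := by rintro rfl; exact h1 hin
        simp [hpo, hpi, hWp, hWm]

lemma mw_expand (N : OrderedPiNet n P T) (m : P → ℤ) (p : P) :
    N.mw m p = ∑ q, m q * N.mw (fun r => if r = q then 1 else 0) p := by
  suffices H : ∀ k, ∀ p : P, n - (N.lvlP p : ℕ) ≤ k →
      N.mw m p = ∑ q, m q * N.mw (fun r => if r = q then 1 else 0) p from
    H n p (by omega)
  intro k
  induction k with
  | zero => exact fun p hp => absurd hp (by have := (N.lvlP p).isLt; omega)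
  | succ k IH =>
    intro p hp
    rw [N.mw_def m p]
    have hR : ∑ q, m q * N.mw (fun r => if r = q then 1 else 0) p
        = (∑ q, m q * (if p = q then 1 else 0))
          - ∑ q, m q * ∑ r : P, (if (N.lvlP p : ℕ) + 1 = (N.lvlP r : ℕ)
              then N.mw (fun r' => if r' = q then 1 else 0) r * (N.pot r p : ℤ) else 0) := by
      rw [← Finset.sum_sub_distrib]
      refine Finset.sum_congr rfl fun q _ => ?_
      rw [N.mw_def (fun r => if r = q then 1 else 0) p]
      ring
    rw [hR]
    congr 1
    · simp [mul_ite, Finset.sum_ite_eq]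
    · have hterm : ∀ r : P, (if (N.lvlP p : ℕ) + 1 = (N.lvlP r : ℕ)
          then N.mw m r * (N.pot r p : ℤ) else 0)
          = ∑ q, m q * (if (N.lvlP p : ℕ) + 1 = (N.lvlP r : ℕ)
              then N.mw (fun r' => if r' = q then 1 else 0) r * (N.pot r p : ℤ) else 0) := by
        intro r
        split_ifs with hr
        · rw [IH r (by have := (N.lvlP r).isLt; omega), Finset.sum_mul]
          exact Finset.sum_congr rfl fun q _ => mul_assoc _ _ _
        · simp
      rw [Finset.sum_congr rfl fun r _ => hterm r, Finset.sum_comm]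
      exact Finset.sum_congr rfl fun q _ => (Finset.mul_sum _ _ _).symm

end OrderedPiNet
namespace OrderedPiNet
variable {n : ℕ} {P T : Type*} [Fintype P] [Fintype T] [DecidableEq P] [DecidableEq T]

/-- The marking-witness matrix `B` over `ℚ`. -/
noncomputable def Bq (N : OrderedPiNet n P T) (p q : P) : ℚ :=
  ((N.mw (fun r => if r = q then 1 else 0) p : ℤ) : ℚ)

lemma Bq_def (N : OrderedPiNet n P T) (p q : P) :
    N.Bq p q = (if p = q then 1 else 0) - ∑ r : P, (if (N.lvlP p : ℕ) + 1 = (N.lvlP r : ℕ)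
      then N.Bq r q * (N.pot r p : ℚ) else 0) := by
  unfold Bq
  rw [N.mw_def]
  push_cast
  rfl


lemma vBasis_eq (N : OrderedPiNet n P T) (i : Fin n) (q : P) :
    vBasis N i q = ∑ p ∈ Finset.univ.filter (fun p => N.lvlP p = i), N.Bq p q := by
  unfold vBasis Bq
  push_cast
  rfl

/-- key kernel computation: `B · W` row at `p` is `e_out - e_in`. -/
lemma row_ker (N : OrderedPiNet n P T) (t : T) (p : P) :
    ∑ q, N.Bq p q * ((N.Wp q t : ℚ) - (N.Wm q t : ℚ))
      = (if p = N.outPlace t then 1 else 0) - (if p = N.inPlace t then 1 else 0) := by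
  have h := N.mw_expand (fun q => (N.Wp q t : ℤ) - (N.Wm q t : ℤ)) p
  rw [N.mw_delta t p] at h
  have h' := congrArg (fun z : ℤ => (z : ℚ)) h.symm
  push_cast at h'
  rw [← h']
  refine Finset.sum_congr rfl fun q _ => ?_
  unfold Bq
  ring

noncomputable def Bmat (N : OrderedPiNet n P T) : Matrix P P ℚ :=
  Matrix.of fun p q => N.Bq p q

noncomputable def Dmat (N : OrderedPiNet n P T) : Matrix P P ℚ :=
  Matrix.of fun p r => (if p = r then 1 else 0)
    + (if (N.lvlP p : ℕ) + 1 = (N.lvlP r : ℕ) then (N.pot r p : ℚ) else 0)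

lemma DB (N : OrderedPiNet n P T) : N.Dmat * N.Bmat = 1 := by
  ext p q
  rw [Matrix.mul_apply, Matrix.one_apply]
  have : ∀ r : P, N.Dmat p r * N.Bmat r q
      = (if p = r then N.Bq r q else 0)
        + (if (N.lvlP p : ℕ) + 1 = (N.lvlP r : ℕ) then (N.pot r p : ℚ) * N.Bq r q else 0) := by
    intro r
    show ((if p = r then (1:ℚ) else 0) + _) * N.Bq r q = _
    split_ifs <;> ring
  rw [Finset.sum_congr rfl fun r _ => this r, Finset.sum_add_distrib,
    Finset.sum_ite_eq Finset.univ p (fun r => N.Bq r q)]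
  simp only [Finset.mem_univ, if_true]
  have := N.Bq_def p q
  have hc : ∀ r : P, (if (N.lvlP p : ℕ) + 1 = (N.lvlP r : ℕ) then (N.pot r p : ℚ) * N.Bq r q else 0)
      = (if (N.lvlP p : ℕ) + 1 = (N.lvlP r : ℕ) then N.Bq r q * (N.pot r p : ℚ) else 0) := by
    intro r; split_ifs <;> ring
  rw [Finset.sum_congr rfl fun r _ => hc r]
  linarith [N.Bq_def p q]

lemma BD (N : OrderedPiNet n P T) : N.Bmat * N.Dmat = 1 :=
  mul_eq_one_comm.mp N.DB

lemma fiberwise (N : OrderedPiNet n P T) (a : Fin n → ℚ) (q : P) :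
    ∑ i, a i * vBasis N i q = ∑ p, a (N.lvlP p) * N.Bq p q := by
  rw [← Finset.sum_fiberwise Finset.univ N.lvlP (fun p => a (N.lvlP p) * N.Bq p q)]
  refine Finset.sum_congr rfl fun i _ => ?_
  rw [vBasis_eq, Finset.mul_sum]
  refine Finset.sum_congr rfl fun p hp => ?_
  rw [(Finset.mem_filter.mp hp).2]

lemma vecMul_Bmat (N : OrderedPiNet n P T) (x : P → ℚ) (q : P) :
    Matrix.vecMul x N.Bmat q = ∑ p, x p * N.Bq p q := by
  simp [Matrix.vecMul, dotProduct, Bmat]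

lemma B_inj (N : OrderedPiNet n P T) (x y : P → ℚ)
    (h : ∀ q, ∑ p, x p * N.Bq p q = ∑ p, y p * N.Bq p q) : x = y := by
  have hx : Matrix.vecMul x N.Bmat = Matrix.vecMul y N.Bmat := by
    funext q; rw [vecMul_Bmat, vecMul_Bmat]; exact h q
  have := congrArg (fun z => Matrix.vecMul z N.Dmat) hx
  simpa [Matrix.vecMul_vecMul, N.BD] using this

end OrderedPiNet
/-- The vectors `v_1, …, v_n` form a basis of the left kernel of the incidence
matrix: each is an S-semi-flow, and every S-semi-flow is a unique rational
linear combination of them. -/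
theorem stmt15 {n : ℕ} {P T : Type*} [Fintype P] [Fintype T] [DecidableEq P]
    [DecidableEq T] (N : OrderedPiNet n P T) :
    (∀ (i : Fin n) (t : T),
      ∑ q, vBasis N i q * ((N.Wp q t : ℚ) - (N.Wm q t : ℚ)) = 0) ∧
    (∀ v : P → ℚ, (∀ t, ∑ q, v q * ((N.Wp q t : ℚ) - (N.Wm q t : ℚ)) = 0) →
      ∃! a : Fin n → ℚ, v = fun q => ∑ i, a i * vBasis N i q) := by
  constructor
  · intro i t
    have h1 : ∀ q : P, vBasis N i q * ((N.Wp q t : ℚ) - (N.Wm q t : ℚ))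
        = ∑ p ∈ Finset.univ.filter (fun p => N.lvlP p = i),
            N.Bq p q * ((N.Wp q t : ℚ) - (N.Wm q t : ℚ)) := by
      intro q; rw [N.vBasis_eq, Finset.sum_mul]
    rw [Finset.sum_congr rfl fun q _ => h1 q, Finset.sum_comm,
      Finset.sum_congr rfl fun p _ => N.row_ker t p, Finset.sum_sub_distrib,
      Finset.sum_ite_eq' _ (N.outPlace t) (fun _ => (1 : ℚ)),
      Finset.sum_ite_eq' _ (N.inPlace t) (fun _ => (1 : ℚ))]
    simp [Finset.mem_filter, N.outPlace_lvl, N.inPlace_lvl]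
  · intro v hv
    set u : P → ℚ := Matrix.vecMul v N.Dmat with hu
    have huB : ∀ q, ∑ p, u p * N.Bq p q = v q := by
      intro q
      rw [← N.vecMul_Bmat, hu, Matrix.vecMul_vecMul, N.DB, Matrix.vecMul_one]
    have hstep : ∀ t, u (N.outPlace t) = u (N.inPlace t) := by
      intro t
      have h0 := hv t
      rw [Finset.sum_congr rfl fun q _ =>
        (by rw [← huB q, Finset.sum_mul] :
          v q * ((N.Wp q t : ℚ) - (N.Wm q t : ℚ))
            = ∑ p, u p * N.Bq p q * ((N.Wp q t : ℚ) - (N.Wm q t : ℚ))),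
        Finset.sum_comm] at h0
      have h3 : ∀ p : P, ∑ q, u p * N.Bq p q * ((N.Wp q t : ℚ) - (N.Wm q t : ℚ))
          = (if p = N.outPlace t then u p else 0) - (if p = N.inPlace t then u p else 0) := by
        intro p
        rw [Finset.sum_congr rfl fun q _ => mul_assoc (u p) _ _, ← Finset.mul_sum,
          N.row_ker t p]
        split_ifs <;> ring
      rw [Finset.sum_congr rfl fun p _ => h3 p, Finset.sum_sub_distrib,
        Finset.sum_ite_eq' _ (N.outPlace t) u,
        Finset.sum_ite_eq' _ (N.inPlace t) u] at h0
      simp only [Finset.mem_univ, if_true] at h0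
      linarith
    have hconst : ∀ p q : P, N.lvlP p = N.lvlP q → u p = u q := by
      intro p q h
      have hpath := N.strong p q h
      clear h
      induction hpath with
      | refl => rfl
      | tail hab harc ih =>
        rcases harc with ⟨t, hint, houtt⟩
        rw [ih, ← hint, ← houtt]
        exact (hstep t).symm
    set a : Fin n → ℚ := fun i => u (Function.surjInv N.lvl_surj i) with ha
    have hul : ∀ p, u p = a (N.lvlP p) := fun p =>
      hconst p _ (Function.surjInv_eq N.lvl_surj (N.lvlP p)).symm
    have hva : v = fun q => ∑ i, a i * vBasis N i q := by
      funext q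
      rw [show (∑ i, a i * vBasis N i q) = ∑ p, a (N.lvlP p) * N.Bq p q from
        N.fiberwise a q, ← huB q]
      exact Finset.sum_congr rfl fun p _ => by rw [hul p]
    refine ⟨a, hva, ?_⟩
    intro b hb
    funext i
    have hbb : ∀ q, ∑ p, b (N.lvlP p) * N.Bq p q = ∑ p, a (N.lvlP p) * N.Bq p q := by
      intro q
      rw [← N.fiberwise b q, ← N.fiberwise a q, ← congrFun hb q, ← congrFun hva q]
    have h6 := congrFun (N.B_inj _ _ hbb) (Function.surjInv N.lvl_surj i)
    rw [Function.surjInv_eq N.lvl_surj i] at h6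
    exact h6
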